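/- Let c be the n×n matrix with diagonal 2, superdiagonal −1, and additionally c_{k,1} = −1 for a single k with 2 ≤ k ≤ n (all other entries as in the bidiagonal matrix). Then det c = 2^n − 2^{n−k}. -/

import Mathlib

lemma val_succAbove_aux {m : ℕ} (p : Fin (m + 1)) (i : Fin m) :
    ((p.succAbove i : Fin (m + 1)) : ℕ) = if (i : ℕ) < (p : ℕ) then (i : ℕ) else (i : ℕ) + 1 := by
  rcases lt_or_ge ((i : ℕ)) ((p : ℕ)) with h | h
  · rw [Fin.succAbove_of_castSucc_lt _ _ (by simpa [Fin.lt_def] using h)]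
    simp [h]
  · rw [Fin.succAbove_of_le_castSucc _ _ (by simpa [Fin.le_def] using h)]
    simp [Nat.not_lt.2 h]

/-- The bidiagonal matrix (diagonal `2`, superdiagonal `-1`) with an extra
entry `-1` at position `(k, 1)` for a single row `k` (here `k` is 0-indexed,
`1 ≤ k ≤ n-1`, corresponding to the paper's `k ∈ {2,…,n}`) has determinant
`2^n − 2^{n−k}` (paper's count), i.e. `2^n - 2^(n-1-k)` in 0-indexed form. -/
theorem stmt13 (n : ℕ) (hn : 2 ≤ n) (k : Fin n) (hk : 1 ≤ (k : ℕ)) :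
    Matrix.det (fun i j : Fin n =>
      if i = j then (2 : ℤ)
      else if (j : ℕ) = (i : ℕ) + 1 then -1
      else if i = k ∧ (j : ℕ) = 0 then -1
      else 0)
      = 2 ^ n - 2 ^ (n - 1 - (k : ℕ)) := by
  obtain ⟨m, rfl⟩ : ∃ m, n = m + 1 := ⟨n - 1, by omega⟩
  set k' : ℕ := (k : ℕ) with hk'
  have hk'm : k' ≤ m := by omega
  set M : Matrix (Fin (m + 1)) (Fin (m + 1)) ℤ := fun i j =>
      if i = j then (2 : ℤ)
      else if (j : ℕ) = (i : ℕ) + 1 then -1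
      else if i = k ∧ (j : ℕ) = 0 then -1
      else 0 with hM
  show M.det = _
  rw [Matrix.det_succ_column_zero]
  -- only the i = 0 and i = k terms survive
  have h0k : (0 : Fin (m + 1)) ≠ k := by
    intro h
    have := congrArg Fin.val h
    simp at this
    omega
  rw [← Finset.sum_subset (Finset.subset_univ ({0, k} : Finset (Fin (m + 1))))
      (fun x _ hx => by
        simp only [Finset.mem_insert, Finset.mem_singleton, not_or] at hx
        obtain ⟨hx0, hxk⟩ := hx
        have hMx0 : M x 0 = 0 := by
          have hxv : (0 : ℕ) ≠ (x : ℕ) + 1 := by omega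
          simp [hM, hx0, hxk, hxv.symm]
        rw [hMx0, mul_zero, zero_mul]),
    Finset.sum_pair h0k]
  -- first term
  have hA : (M.submatrix (Fin.succAbove 0) Fin.succ).det = 2 ^ m := by
    rw [Matrix.det_of_upperTriangular]
    · have : ∀ i : Fin m, M.submatrix (Fin.succAbove 0) Fin.succ i i = 2 := by
        intro i
        simp only [Matrix.submatrix_apply]
        simp [hM, Fin.succAbove_zero]
      rw [Finset.prod_congr rfl fun i _ => this i, Finset.prod_const]
      simp
    · intro i j hij
      have hij' : (j : ℕ) < (i : ℕ) := hij
      have hne : (Fin.succAbove 0 i : Fin (m+1)) ≠ Fin.succ j := by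
        intro h
        have := congrArg Fin.val h
        rw [val_succAbove_aux, Fin.val_succ] at this
        simp at this
        omega
      have hs : ¬ ((Fin.succ j : Fin (m+1)) : ℕ) = (Fin.succAbove 0 i : ℕ) + 1 := by
        rw [val_succAbove_aux, Fin.val_succ]
        simp
        omega
      have h0 : ¬ ((Fin.succ j : Fin (m+1)) : ℕ) = 0 := by simp
      rw [Matrix.submatrix_apply]
      simp only [hM]
      rw [if_neg hne, if_neg hs, if_neg (by tauto)]
  -- second term
  have hB : (M.submatrix (Fin.succAbove k) Fin.succ).det = (-1) ^ k' * 2 ^ (m - k') := by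
    set g : Fin m → Fin m := fun i =>
      if h : (i : ℕ) < k' then ⟨k' - 1 - (i : ℕ), by omega⟩ else i with hg
    have hgval : ∀ i : Fin m, ((g i : Fin m) : ℕ) =
        if (i : ℕ) < k' then k' - 1 - (i : ℕ) else (i : ℕ) := by
      intro i
      by_cases h : (i : ℕ) < k' <;> simp [hg, h]
    have hginv : Function.Involutive g := by
      intro i
      have h1 := hgval i
      apply Fin.ext
      rw [hgval]
      by_cases h : (i : ℕ) < k'
      · rw [h1]
        simp only [h, if_true]
        rw [if_pos (by omega)]
        omega
      · rw [h1]
        simp [h]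
    set e := hginv.toPerm with he
    have heval : ∀ i : Fin m, ((e i : Fin m) : ℕ) =
        if (i : ℕ) < k' then k' - 1 - (i : ℕ) else (i : ℕ) := fun i => hgval i
    rw [← Matrix.det_submatrix_equiv_self e (M.submatrix (Fin.succAbove k) Fin.succ)]
    set C := (M.submatrix (Fin.succAbove k) Fin.succ).submatrix e e with hC
    have hCentry : ∀ i j : Fin m, C i j = M (Fin.succAbove k (e i)) (Fin.succ (e j)) := by
      intro i j; simp [hC, Matrix.submatrix_apply]
    have hrval : ∀ i : Fin m, ((Fin.succAbove k (e i) : Fin (m+1)) : ℕ) =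
        if (i : ℕ) < k' then k' - 1 - (i : ℕ) else (i : ℕ) + 1 := by
      intro i
      rw [val_succAbove_aux, heval]
      by_cases h : (i : ℕ) < k'
      · rw [if_pos h, if_pos h, if_pos (by omega)]
      · rw [if_neg h, if_neg h, if_neg (by omega)]
    have hcval : ∀ j : Fin m, ((Fin.succ (e j) : Fin (m+1)) : ℕ) =
        (if (j : ℕ) < k' then k' - 1 - (j : ℕ) else (j : ℕ)) + 1 := by
      intro j; rw [Fin.val_succ, heval]
    rw [Matrix.det_of_upperTriangular]
    · have hdiag : ∀ i : Fin m, C i i = if (i : ℕ) < k' then (-1 : ℤ) else 2 := by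
        intro i
        rw [hCentry]
        by_cases h : (i : ℕ) < k'
        · have hne : (Fin.succAbove k (e i) : Fin (m+1)) ≠ Fin.succ (e i) := by
            apply Fin.ne_of_val_ne
            rw [hrval, hcval, if_pos h, if_pos h]
            omega
          have hs : ((Fin.succ (e i) : Fin (m+1)) : ℕ) = (Fin.succAbove k (e i) : ℕ) + 1 := by
            rw [hrval, hcval, if_pos h, if_pos h]
          simp only [hM]
          rw [if_neg hne, if_pos hs, if_pos h]
        · have heq : (Fin.succAbove k (e i) : Fin (m+1)) = Fin.succ (e i) := by
            apply Fin.ext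
            rw [hrval, hcval, if_neg h, if_neg h]
          simp only [hM]
          rw [if_pos heq, if_neg h]
      rw [Finset.prod_congr rfl fun i _ => hdiag i]
      rw [Fin.prod_univ_eq_prod_range (fun t => if t < k' then (-1 : ℤ) else 2) m]
      rw [← Finset.prod_range_mul_prod_Ico _ hk'm]
      have h1 : ∏ t ∈ Finset.range k', (if t < k' then (-1 : ℤ) else 2) = (-1) ^ k' := by
        rw [Finset.prod_congr rfl fun t ht => if_pos (Finset.mem_range.mp ht),
          Finset.prod_const, Finset.card_range]
      have h2 : ∏ t ∈ Finset.Ico k' m, (if t < k' then (-1 : ℤ) else 2) = 2 ^ (m - k') := by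
        rw [Finset.prod_congr rfl fun t ht => if_neg (by
          have := Finset.mem_Ico.mp ht; omega), Finset.prod_const, Nat.card_Ico]
      rw [h1, h2]
    · intro i j hij
      have hij' : (j : ℕ) < (i : ℕ) := hij
      rw [hCentry]
      have hne : (Fin.succAbove k (e i) : Fin (m+1)) ≠ Fin.succ (e j) := by
        apply Fin.ne_of_val_ne
        rw [hrval, hcval]
        split_ifs <;> omega
      have hs : ¬ ((Fin.succ (e j) : Fin (m+1)) : ℕ) = (Fin.succAbove k (e i) : ℕ) + 1 := by
        rw [hrval, hcval]
        split_ifs <;> omega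
      have h0 : ¬ ((Fin.succ (e j) : Fin (m+1)) : ℕ) = 0 := by simp
      simp only [hM]
      rw [if_neg hne, if_neg hs, if_neg (by tauto)]
  have hM00 : M 0 0 = 2 := by simp [hM]
  have hMk0 : M k 0 = -1 := by
    have h1 : k ≠ (0 : Fin (m+1)) := h0k.symm
    have h2 : ((0 : Fin (m+1)) : ℕ) ≠ (k : ℕ) + 1 := by simp
    simp [hM, h1, h2]
  rw [hA, hB, hM00, hMk0]
  have hpow : (-1 : ℤ) ^ k' * (-1) ^ k' = 1 := by
    rw [← pow_add]
    exact Even.neg_one_pow ⟨k', rfl⟩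
  have hexp : m + 1 - 1 - k' = m - k' := by omega
  rw [hexp]
  simp only [Fin.val_zero, pow_zero]
  calc (1 : ℤ) * 2 * 2 ^ m + (-1) ^ k' * -1 * ((-1) ^ k' * 2 ^ (m - k'))
      = 2 ^ (m + 1) - ((-1 : ℤ) ^ k' * (-1) ^ k') * 2 ^ (m - k') := by ring
    _ = 2 ^ (m + 1) - 2 ^ (m - k') := by rw [hpow, one_mul]
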